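/- For every positive integer n there exist a positive integer N and a bipartite graph B : Fin N → Fin N → Prop such that for all finite sets S, T ⊆ Fin N with n * |S| ≥ N and n * |T| ≥ N, there exist s ∈ S and t ∈ T with B s t, and there exist s' ∈ S and t' ∈ T with ¬ B s' t'. (Such expander-like bipartite graphs are used to simulate parallel edges by simple edges.) -/

import Mathlib

open Finset

lemma aux_card_le {k N : ℕ} (f : Fin N → (Fin k → Bool)) (hf : Function.Injective f)
    (P : Finset (Fin k)) (b : Bool) (S : Finset (Fin N))
    (hS : ∀ s ∈ S, ∀ q ∈ P, f s q = b) :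
    S.card ≤ 2 ^ (k - P.card) := by
  classical
  have h1 : S.card ≤ (Fintype.piFinset
      (fun i : Fin k => if i ∈ P then ({b} : Finset Bool) else Finset.univ)).card := by
    apply Finset.card_le_card_of_injOn f _ hf.injOn
    intro s hs
    rw [Finset.mem_coe, Fintype.mem_piFinset]
    intro i
    by_cases hi : i ∈ P
    · simp [hi, hS s hs i hi]
    · simp [hi]
  refine h1.trans_eq ?_
  rw [Fintype.card_piFinset]
  have : ∀ i : Fin k, (if i ∈ P then ({b} : Finset Bool) else Finset.univ).card
      = if i ∈ P then 1 else 2 := by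
    intro i; by_cases hi : i ∈ P <;> simp [hi]
  rw [Finset.prod_congr rfl (fun i _ => this i), Finset.prod_ite]
  simp only [Finset.prod_const, one_pow, one_mul]
  congr 1
  rw [Finset.filter_not, Finset.card_sdiff_of_subset (Finset.filter_subset _ _)]
  congr 1
  · simp
  · rw [Finset.filter_univ_mem]

/-- Expander-like bipartite graphs exist: for every positive `n` there are `N > 0` and a
bipartite graph `B` on `Fin N` versus `Fin N` such that any two sets of size at least
`N / n` are joined by an edge of `B` and by an edge of the bipartite complement of `B`. -/
theorem stmt_7 (n : ℕ) (hn : 0 < n) :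
    ∃ N : ℕ, 0 < N ∧ ∃ B : Fin N → Fin N → Prop,
      ∀ S T : Finset (Fin N), N ≤ n * S.card → N ≤ n * T.card →
        (∃ s ∈ S, ∃ t ∈ T, B s t) ∧ (∃ s' ∈ S, ∃ t' ∈ T, ¬ B s' t') := by
  classical
  set k := 2 * n ^ 2 with hk
  have hkpos : 0 < k := by positivity
  set N := 2 ^ k with hN
  have hNpos : 0 < N := pow_pos (by norm_num) _
  have hcard : Fintype.card (Fin k → Bool) = N := by simp [hN]
  let e := Fintype.equivFinOfCardEq hcard
  let f : Fin N → (Fin k → Bool) := e.symm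
  have hf : Function.Injective f := e.symm.injective
  let g : Fin N → Fin k := fun t => ⟨t.val % k, Nat.mod_lt _ hkpos⟩
  refine ⟨N, hNpos, fun s t => f s (g t) = true, fun S T hSc hTc => ?_⟩
  have hkN : k ≤ N := (Nat.lt_two_pow_self (n := k)).le
  set P := T.image g with hP
  -- fiber bound
  have hfiber : ∀ p : Fin k, (T.filter (fun t => g t = p)).card ≤ N / k + 1 := by
    intro p
    have : (T.filter (fun t => g t = p)).card ≤ (Finset.range (N / k + 1)).card := by
      apply Finset.card_le_card_of_injOn (fun t => t.val / k)
      · intro t ht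
        simp only [Finset.mem_coe, Finset.mem_range]
        exact Nat.lt_succ_of_le (Nat.div_le_div_right t.isLt.le)
      · intro t1 h1 t2 h2 hdiv
        simp only [Finset.mem_coe, Finset.mem_filter] at h1 h2
        have e1 : t1.val % k = p.val := congrArg Fin.val h1.2
        have e2 : t2.val % k = p.val := congrArg Fin.val h2.2
        have hdiv' : t1.val / k = t2.val / k := hdiv
        have : t1.val = t2.val := by
          conv_lhs => rw [← Nat.div_add_mod t1.val k]
          conv_rhs => rw [← Nat.div_add_mod t2.val k]
          rw [e1, e2, hdiv']
        exact Fin.ext this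
    simpa using this
  have hTP : T.card ≤ P.card * (N / k + 1) := by
    rw [Finset.card_eq_sum_card_image g T]
    have h := Finset.sum_le_card_nsmul (T.image g)
      (fun p => (T.filter (fun t => g t = p)).card) (N / k + 1) (fun p _ => hfiber p)
    simpa [smul_eq_mul, hP] using h
  -- n ≤ P.card
  have hmn : n ≤ P.card := by
    have h1 : N ≤ n * (P.card * (N / k + 1)) := hTc.trans (Nat.mul_le_mul_left n hTP)
    have h2 : N / k * k ≤ N := Nat.div_mul_le_self N k
    have h3 : N * k ≤ n * (P.card * (N / k + 1)) * k := Nat.mul_le_mul_right k h1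
    have h4 : n * (P.card * (N / k + 1)) * k = n * P.card * (N / k * k + k) := by ring
    have h5 : n * P.card * (N / k * k + k) ≤ n * P.card * (N + N) :=
      Nat.mul_le_mul_left _ (Nat.add_le_add h2 hkN)
    have h6 : N * k ≤ n * P.card * (N + N) := by rw [← h4] at h5; exact h3.trans h5
    have h7 : N * (2 * n ^ 2) ≤ N * (2 * (n * P.card)) := by
      have e1 : N * (2 * n ^ 2) = N * k := by rw [hk]
      have e2 : n * P.card * (N + N) = N * (2 * (n * P.card)) := by ring
      rw [e1, ← e2]; exact h6
    have h8 : 2 * n ^ 2 ≤ 2 * (n * P.card) := Nat.le_of_mul_le_mul_left h7 hNpos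
    have h9 : n * n ≤ n * P.card := by
      have h10 : n ^ 2 ≤ n * P.card := by omega
      have e3 : n * n = n ^ 2 := (sq n).symm
      rw [e3]; exact h10
    exact Nat.le_of_mul_le_mul_left h9 hn
  have hmk : P.card ≤ k := by
    calc P.card ≤ (Finset.univ : Finset (Fin k)).card := Finset.card_le_card (Finset.subset_univ _)
    _ = k := by simp
  have hn2 : n < 2 ^ P.card :=
    lt_of_lt_of_le (Nat.lt_two_pow_self (n := n)) (Nat.pow_le_pow_right (by norm_num) hmn)
  have key : ∀ b : Bool, ∃ s ∈ S, ∃ t ∈ T, f s (g t) = b := by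
    intro b
    by_contra hc
    push_neg at hc
    have hall : ∀ s ∈ S, ∀ q ∈ P, f s q = !b := by
      intro s hs q hq
      rw [hP, Finset.mem_image] at hq
      obtain ⟨t, ht, rfl⟩ := hq
      have := hc s hs t ht
      cases hb : f s (g t) <;> cases b <;> simp_all
    have hSle : S.card ≤ 2 ^ (k - P.card) := aux_card_le f hf P (!b) S hall
    have b1 : N ≤ n * 2 ^ (k - P.card) := hSc.trans (Nat.mul_le_mul_left _ hSle)
    have b2 : n * 2 ^ (k - P.card) < 2 ^ P.card * 2 ^ (k - P.card) :=
      (Nat.mul_lt_mul_right (pow_pos (by norm_num : 0 < 2) (k - P.card))).mpr hn2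
    have b3 : 2 ^ P.card * 2 ^ (k - P.card) = N := by
      rw [hN, ← pow_add, Nat.add_sub_cancel' hmk]
    exact absurd (b1.trans_lt (b2.trans_eq b3)) (lt_irrefl N)
  obtain ⟨s, hs, t, ht, hb⟩ := key true
  obtain ⟨s', hs', t', ht', hb'⟩ := key false
  exact ⟨⟨s, hs, t, ht, hb⟩, ⟨s', hs', t', ht', by simp [hb']⟩⟩
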